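/- Let n ≥ 2, let α₁ ≥ α₂ ≥ … ≥ αₙ and β₁ ≥ β₂ ≥ … ≥ β_{n−1} be real numbers with α_i ≠ β_j for all i, j. Let N be the (n−1)×(n−1) matrix with entries N_{i,j} = 1 if αₙ < β_j < α_i and N_{i,j} = 0 otherwise. Then det N = 1 if the interlacing inequalities α₁ ≥ β₁ ≥ α₂ ≥ β₂ ≥ … ≥ β_{n−1} ≥ αₙ hold, and det N = 0 otherwise. -/

import Mathlib

open scoped Classical in
/-- Olshanski's determinant formula (eq. (8) of the paper): the determinant
of the `(n-1)×(n-1)` matrix of characteristic functions `N_{i,j} = 1_{αₙ < β_j < α_i}`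
equals the characteristic function of the Cauchy–Rayleigh interlacing region.
Here `n = M + 2`. -/
theorem stmt_3 (M : ℕ) (α : Fin (M + 2) → ℝ) (β : Fin (M + 1) → ℝ)
    (hα : Antitone α) (hβ : Antitone β) (hne : ∀ i j, α i ≠ β j) :
    Matrix.det (Matrix.of fun i j : Fin (M + 1) =>
        if α (Fin.last (M + 1)) < β j ∧ β j < α i.castSucc then (1 : ℝ) else 0)
      = if ∀ i : Fin (M + 1), β i ≤ α i.castSucc ∧ α i.succ ≤ β i then 1 else 0 := by
  by_cases hP : ∀ i : Fin (M + 1), β i ≤ α i.castSucc ∧ α i.succ ≤ β i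
  · rw [if_pos hP]
    rw [Matrix.det_of_upperTriangular]
    · have hdiag : ∀ i : Fin (M + 1),
          (Matrix.of fun i j : Fin (M + 1) =>
            if α (Fin.last (M + 1)) < β j ∧ β j < α i.castSucc then (1 : ℝ) else 0) i i = 1 := by
        intro i
        simp only [Matrix.of_apply]
        rw [if_pos]
        constructor
        · exact lt_of_le_of_ne (le_trans (hα (Fin.le_last i.succ)) (hP i).2) (hne _ _)
        · exact lt_of_le_of_ne (hP i).1 (Ne.symm (hne _ _))
      simp [hdiag]
    · intro i j hji
      simp only [id_eq] at hji
      simp only [Matrix.of_apply]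
      rw [if_neg]
      rintro ⟨-, h2⟩
      have h3 : α i.castSucc ≤ α j.succ := by
        apply hα
        simp only [Fin.le_def, Fin.val_succ, Fin.coe_castSucc]
        omega
      have h4 : α j.succ ≤ β j := (hP j).2
      linarith
  · rw [if_neg hP]
    obtain ⟨i, hi⟩ := not_forall.mp hP
    rw [not_and_or] at hi
    rcases hi with h1 | h2
    · -- subcase a : α i.castSucc < β i ; use permutation expansion
      have ha : α i.castSucc < β i := lt_of_not_ge h1
      rw [Matrix.det_apply]
      apply Finset.sum_eq_zero
      intro σ _
      have hex : ∃ j : Fin (M + 1), j ≤ i ∧ i ≤ σ j := by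
        by_contra h
        push_neg at h
        have hmap : ∀ j ∈ Finset.Iic i, σ j ∈ Finset.Iio i := by
          intro j hj
          simp only [Finset.mem_Iic] at hj
          simpa using h j hj
        have := Finset.card_le_card_of_injOn σ hmap (σ.injective.injOn)
        rw [Fin.card_Iic, Fin.card_Iio] at this
        omega
      obtain ⟨j, hj1, hj2⟩ := hex
      have hz : (Matrix.of fun i j : Fin (M + 1) =>
          if α (Fin.last (M + 1)) < β j ∧ β j < α i.castSucc then (1 : ℝ) else 0) (σ j) j = 0 := by
        simp only [Matrix.of_apply]
        rw [if_neg]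
        rintro ⟨-, h2⟩
        have e1 : α ((σ j).castSucc) ≤ α i.castSucc :=
          hα (Fin.castSucc_le_castSucc_iff.mpr hj2)
        have e2 : β i ≤ β j := hβ hj1
        linarith
      have hprod : (∏ x : Fin (M + 1), (Matrix.of fun i j : Fin (M + 1) =>
          if α (Fin.last (M + 1)) < β j ∧ β j < α i.castSucc then (1 : ℝ) else 0) (σ x) x) = 0 :=
        Finset.prod_eq_zero (Finset.mem_univ j) hz
      rw [hprod, smul_zero]
    · -- subcase b : β i < α i.succ
      have hb : β i < α i.succ := lt_of_not_ge h2
      by_cases hlast : α (Fin.last (M + 1)) < β (Fin.last M)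
      · -- duplicate columns via pigeonhole on down-sets
        have hiM : i.1 < M := by
          rcases lt_or_eq_of_le (Nat.lt_succ_iff.mp i.2) with h | h
          · exact h
          · exfalso
            have : i = Fin.last M := Fin.ext h
            rw [this] at hb
            have : (Fin.last M).succ = Fin.last (M + 1) := rfl
            rw [this] at hb
            linarith
        set S : Fin (M + 1) → Finset (Fin (M + 1)) :=
          fun j => Finset.univ.filter (fun k => β j < α k.castSucc) with hS
        have hmono : ∀ j j' : Fin (M + 1), j ≤ j' → S j ⊆ S j' := by
          intro j j' hjj k hk
          simp only [hS, Finset.mem_filter, Finset.mem_univ, true_and] at hk ⊢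
          exact lt_of_le_of_lt (hβ hjj) hk
        have hcard_lb : ∀ j : Fin (M + 1), i ≤ j → i.1 + 2 ≤ (S j).card := by
          intro j hij
          have hsub : Finset.Iic (⟨i.1 + 1, by omega⟩ : Fin (M + 1)) ⊆ S j := by
            intro k hk
            simp only [Finset.mem_Iic, Fin.le_def] at hk
            simp only [hS, Finset.mem_filter, Finset.mem_univ, true_and]
            have e1 : α i.succ ≤ α k.castSucc := by
              apply hα
              simp only [Fin.le_def, Fin.val_succ, Fin.coe_castSucc]
              omega
            have e2 : β j ≤ β i := hβ hij
            linarith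
          calc i.1 + 2 = (Finset.Iic (⟨i.1 + 1, by omega⟩ : Fin (M + 1))).card := by
                rw [Fin.card_Iic]
            _ ≤ (S j).card := Finset.card_le_card hsub
        have hmaps : ∀ j ∈ Finset.Ici i, (S j).card ∈ Finset.Icc (i.1 + 2) (M + 1) := by
          intro j hj
          simp only [Finset.mem_Ici] at hj
          simp only [Finset.mem_Icc]
          refine ⟨hcard_lb j hj, ?_⟩
          calc (S j).card ≤ (Finset.univ : Finset (Fin (M + 1))).card :=
                Finset.card_le_card (Finset.filter_subset _ _)
            _ = M + 1 := by simp
        have hcards : (Finset.Icc (i.1 + 2) (M + 1)).card < (Finset.Ici i).card := by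
          rw [Nat.card_Icc, Fin.card_Ici]
          omega
        have hpigeon := Finset.exists_ne_map_eq_of_card_lt_of_maps_to hcards hmaps
        obtain ⟨j, hj, j', hj', hne', hcardeq⟩ := hpigeon
        simp only [Finset.mem_Ici] at hj hj'
        have hSeq : S j = S j' := by
          rcases le_total j j' with h | h
          · exact Finset.eq_of_subset_of_card_le (hmono j j' h) (le_of_eq hcardeq.symm)
          · exact (Finset.eq_of_subset_of_card_le (hmono j' j h) (le_of_eq hcardeq)).symm
        apply Matrix.det_zero_of_column_eq hne'
        intro k
        have hβj : α (Fin.last (M + 1)) < β j := lt_of_lt_of_le hlast (hβ (Fin.le_last j))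
        have hβj' : α (Fin.last (M + 1)) < β j' := lt_of_lt_of_le hlast (hβ (Fin.le_last j'))
        have hmem : β j < α k.castSucc ↔ β j' < α k.castSucc := by
          constructor
          · intro h
            have : k ∈ S j := by
              simp only [hS, Finset.mem_filter, Finset.mem_univ, true_and]; exact h
            rw [hSeq] at this
            simpa [hS] using this
          · intro h
            have : k ∈ S j' := by
              simp only [hS, Finset.mem_filter, Finset.mem_univ, true_and]; exact h
            rw [← hSeq] at this
            simpa [hS] using this
        simp only [Matrix.of_apply]
        by_cases hc : β j < α k.castSucc
        · rw [if_pos ⟨hβj, hc⟩, if_pos ⟨hβj', hmem.mp hc⟩]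
        · rw [if_neg (fun hh => hc hh.2), if_neg (fun hh => hc ((hmem.mpr hh.2)))]
      · -- last column is zero
        apply Matrix.det_eq_zero_of_column_eq_zero (Fin.last M)
        intro k
        simp only [Matrix.of_apply]
        rw [if_neg]
        rintro ⟨h1, -⟩
        exact hlast h1
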